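/- Every 2-degenerate simple graph G is group (Δ(G)+1)-edge-choosable. -/

import Mathlib

open SimpleGraph

/-- `G` is `A`-colorable for the Abelian group `A`: for every "oriented weight" `f` on the
edges (encoded as an antisymmetric function on ordered pairs, which is equivalent to fixing an
orientation `D` of `E(G)` and a function `E(G) → A`), there is an `(A,f)`-coloring, i.e. a
vertex coloring `c : V → A` with `c u - c v ≠ f u v` for every edge oriented from `u` to `v`. -/
def IsGroupColorable {V : Type*} (G : SimpleGraph V) (A : Type) [AddCommGroup A] : Prop :=
  ∀ f : V → V → A, (∀ u v, f v u = - f u v) →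
    ∃ c : V → A, ∀ u v, G.Adj u v → c u - c v ≠ f u v

/-- The group chromatic number `χ_g(G)`: the least `m` such that `G` is `A`-colorable for
every Abelian group `A` of order at least `m`. -/
noncomputable def groupChromaticNumber {V : Type*} (G : SimpleGraph V) : ℕ :=
  sInf {m : ℕ | ∀ (A : Type) [AddCommGroup A] [Fintype A],
    m ≤ Fintype.card A → IsGroupColorable G A}

/-- `G` is group `k`-choosable: for every Abelian group `A` of order at least `k`, every
`k`-uniform list assignment `L`, and every antisymmetric edge weight `f` (i.e. an orientation
together with a function `E(G) → A`), there is an `(A,L,f)`-coloring. -/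
def IsGroupChoosable {V : Type*} (G : SimpleGraph V) (k : ℕ) : Prop :=
  ∀ (A : Type) [AddCommGroup A] [Fintype A], k ≤ Fintype.card A →
    ∀ L : V → Finset A, (∀ v, (L v).card = k) →
      ∀ f : V → V → A, (∀ u v, f v u = - f u v) →
        ∃ c : V → A, (∀ v, c v ∈ L v) ∧ ∀ u v, G.Adj u v → c u - c v ≠ f u v

/-- The group choice number `χ_gl(G)`: the least `k` such that `G` is group `k`-choosable. -/
noncomputable def groupChoiceNumber {V : Type*} (G : SimpleGraph V) : ℕ :=
  sInf {k : ℕ | IsGroupChoosable G k}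

/-- `G` is group `k`-edge-choosable iff its line graph is group `k`-choosable. -/
def IsGroupEdgeChoosable {V : Type*} (G : SimpleGraph V) (k : ℕ) : Prop :=
  IsGroupChoosable G.lineGraph k

/-- The group edge chromatic number `χ'_g(G) = χ_g(𝓛(G))`. -/
noncomputable def groupEdgeChromaticNumber {V : Type*} (G : SimpleGraph V) : ℕ :=
  groupChromaticNumber G.lineGraph

/-- The group edge choice number `χ'_gl(G) = χ_gl(𝓛(G))`. -/
noncomputable def groupEdgeChoiceNumber {V : Type*} (G : SimpleGraph V) : ℕ :=
  groupChoiceNumber G.lineGraph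

/-- `G` is a cycle (of some length `n ≥ 3`). -/
def IsCycleGraph {V : Type*} (G : SimpleGraph V) : Prop :=
  ∃ n : ℕ, 3 ≤ n ∧ Nonempty (G ≃g cycleGraph n)

/-- Every 2-degenerate simple graph (every subgraph has a vertex of degree at most 2)
is group `(Δ(G)+1)`-edge-choosable. -/
theorem isGroupEdgeChoosable_of_twoDegenerate {V : Type*} [Fintype V]
    (G : SimpleGraph V) [DecidableRel G.Adj]
    (hdeg : ∀ H : G.Subgraph, H.verts.Nonempty → ∃ v ∈ H.verts, (H.neighborSet v).ncard ≤ 2) :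
    IsGroupEdgeChoosable G (G.maxDegree + 1) := by
  classical
  intro A _ _ hcard L hL f hf
  -- key greedy induction
  suffices key : ∀ n : ℕ, ∀ S : Finset G.edgeSet, S.card = n →
      ∃ c : G.edgeSet → A, (∀ e, c e ∈ L e) ∧
        ∀ e₁ ∈ S, ∀ e₂ ∈ S, G.lineGraph.Adj e₁ e₂ → c e₁ - c e₂ ≠ f e₁ e₂ by
    obtain ⟨c, hc1, hc2⟩ := key (Finset.univ.card) Finset.univ rfl
    exact ⟨c, hc1, fun e₁ e₂ h => hc2 e₁ (Finset.mem_univ _) e₂ (Finset.mem_univ _) h⟩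
  have hLne : ∀ e : G.edgeSet, (L e).Nonempty := by
    intro e
    rw [← Finset.card_pos, hL e]
    omega
  intro n
  induction n using Nat.strong_induction_on with
  | _ n IH =>
    intro S hS
    rcases S.eq_empty_or_nonempty with hSe | hSne
    · refine ⟨fun e => (hLne e).choose, fun e => (hLne e).choose_spec, ?_⟩
      intro e₁ he₁
      simp [hSe] at he₁
    -- build the subgraph spanned by S
    · let H : G.Subgraph :=
        { verts := {x | ∃ e' ∈ S, x ∈ (e' : Sym2 V)}
          Adj := fun x y => ∃ h : G.Adj x y, (⟨s(x, y), h⟩ : G.edgeSet) ∈ S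
          adj_sub := fun h => h.1
          edge_vert := by
            rintro x y ⟨h, hm⟩
            exact ⟨_, hm, by simp⟩
          symm := by
            constructor
            rintro x y ⟨h, hm⟩
            refine ⟨h.symm, ?_⟩
            have : (⟨s(y, x), h.symm⟩ : G.edgeSet) = ⟨s(x, y), h⟩ :=
              Subtype.ext (Sym2.eq_swap)
            rw [this]; exact hm }
      have hHne : H.verts.Nonempty := by
        obtain ⟨e0, he0⟩ := hSne
        exact ⟨(e0 : Sym2 V).out.1, e0, he0, Sym2.out_fst_mem _⟩
      obtain ⟨v, hv, hvdeg⟩ := hdeg H hHne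
      obtain ⟨e, heS, hve⟩ := hv
      obtain ⟨u, hu⟩ := Sym2.mem_iff_exists.mp hve
      have hGvu : G.Adj v u := by
        have := e.2
        rw [hu] at this
        exact this
      have heval : (⟨s(v, u), hGvu⟩ : G.edgeSet) = e := Subtype.ext hu.symm
      -- bound the number of neighbors of e inside S
      let N : Finset G.edgeSet := S.filter (fun e' => G.lineGraph.Adj e e')
      have hNcard : N.card ≤ G.maxDegree := by
        let Nv : Finset G.edgeSet := S.filter (fun e' => e' ≠ e ∧ v ∈ (e' : Sym2 V))
        let Nu : Finset G.edgeSet := S.filter (fun e' => e' ≠ e ∧ u ∈ (e' : Sym2 V))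
        have hsub : N ⊆ Nv ∪ Nu := by
          intro e' he'
          rw [Finset.mem_filter] at he'
          obtain ⟨he'S, hne, x, hx1, hx2⟩ := he'
          rw [hu] at hx1
          simp only [SetLike.mem_coe, Sym2.mem_iff] at hx1 hx2
          rcases hx1 with rfl | rfl
          · exact Finset.mem_union_left _ (Finset.mem_filter.mpr ⟨he'S, Ne.symm hne, hx2⟩)
          · exact Finset.mem_union_right _ (Finset.mem_filter.mpr ⟨he'S, Ne.symm hne, hx2⟩)
        have hfinv : (H.neighborSet v).Finite := Set.toFinite _
        have hvcard : Nv.card ≤ 1 := by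
          have hmaps : ∀ e' ∈ Nv,
              (fun e' : G.edgeSet => if h : v ∈ (e' : Sym2 V) then Sym2.Mem.other h else v) e'
                ∈ (hfinv.toFinset.erase u) := by
            intro e' he'
            rw [Finset.mem_filter] at he'
            obtain ⟨he'S, hne, hve'⟩ := he'
            simp only [dif_pos hve']
            have hspec := Sym2.other_spec hve'
            refine Finset.mem_erase.mpr ⟨?_, ?_⟩
            · intro hequ
              apply hne
              apply Subtype.ext
              rw [← hspec, hequ, ← hu]
            · rw [Set.Finite.mem_toFinset]
              have hadj : G.Adj v (Sym2.Mem.other hve') := by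
                have := e'.2
                rw [← hspec] at this
                exact this
              exact ⟨hadj, by rwa [show (⟨s(v, Sym2.Mem.other hve'), hadj⟩ : G.edgeSet) = e'
                from Subtype.ext hspec]⟩
          have hinj : (↑Nv : Set G.edgeSet).InjOn
              (fun e' : G.edgeSet => if h : v ∈ (e' : Sym2 V) then Sym2.Mem.other h else v) := by
            intro a ha b hb hab
            rw [Finset.mem_coe, Finset.mem_filter] at ha hb
            have hva := ha.2.2
            have hvb := hb.2.2
            simp only [dif_pos hva, dif_pos hvb] at hab
            apply Subtype.ext
            rw [← Sym2.other_spec hva, ← Sym2.other_spec hvb, hab]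
          have h1 := Finset.card_le_card_of_injOn _ hmaps hinj
          have h2 : (hfinv.toFinset.erase u).card ≤ 1 := by
            have huv : u ∈ hfinv.toFinset := by
              rw [Set.Finite.mem_toFinset]
              refine ⟨hGvu, ?_⟩
              rw [heval]; exact heS
            have h3 : hfinv.toFinset.card ≤ 2 := by
              rw [← Set.ncard_eq_toFinset_card _ hfinv]
              exact hvdeg
            have := Finset.card_erase_of_mem huv
            omega
          omega
        have hucard : Nu.card ≤ G.degree u - 1 := by
          have hmaps : ∀ e' ∈ Nu,
              (fun e' : G.edgeSet => if h : u ∈ (e' : Sym2 V) then Sym2.Mem.other h else u) e'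
                ∈ ((G.neighborFinset u).erase v) := by
            intro e' he'
            rw [Finset.mem_filter] at he'
            obtain ⟨he'S, hne, hue'⟩ := he'
            simp only [dif_pos hue']
            have hspec := Sym2.other_spec hue'
            refine Finset.mem_erase.mpr ⟨?_, ?_⟩
            · intro heqv
              apply hne
              apply Subtype.ext
              rw [← hspec, heqv, Sym2.eq_swap, ← hu]
            · rw [SimpleGraph.mem_neighborFinset]
              have := e'.2
              rw [← hspec] at this
              exact this
          have hinj : (↑Nu : Set G.edgeSet).InjOn
              (fun e' : G.edgeSet => if h : u ∈ (e' : Sym2 V) then Sym2.Mem.other h else u) := by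
            intro a ha b hb hab
            rw [Finset.mem_coe, Finset.mem_filter] at ha hb
            have hva := ha.2.2
            have hvb := hb.2.2
            simp only [dif_pos hva, dif_pos hvb] at hab
            apply Subtype.ext
            rw [← Sym2.other_spec hva, ← Sym2.other_spec hvb, hab]
          have h1 := Finset.card_le_card_of_injOn _ hmaps hinj
          have hvmem : v ∈ G.neighborFinset u := by
            rw [SimpleGraph.mem_neighborFinset]
            exact hGvu.symm
          have := Finset.card_erase_of_mem hvmem
          rw [SimpleGraph.card_neighborFinset_eq_degree] at this
          omega
        have hdegu : 1 ≤ G.degree u := by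
          have hvmem : v ∈ G.neighborFinset u := (SimpleGraph.mem_neighborFinset _ _ _).mpr hGvu.symm
          have h0 := Finset.card_pos.mpr ⟨v, hvmem⟩
          rw [SimpleGraph.card_neighborFinset_eq_degree] at h0
          omega
        have hdΔ : G.degree u ≤ G.maxDegree := G.degree_le_maxDegree u
        have := Finset.card_le_card hsub
        have := Finset.card_union_le Nv Nu
        omega
      -- induction on the smaller set
      have hcard' : (S.erase e).card < n := by
        rw [Finset.card_erase_of_mem heS, ← hS]
        have := Finset.card_pos.mpr hSne
        omega
      obtain ⟨c, hc1, hc2⟩ := IH _ hcard' (S.erase e) rfl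
      -- pick a color for e avoiding the forbidden values
      let F : Finset A := N.image (fun e' => c e' + f e e')
      have hFcard : F.card ≤ G.maxDegree := le_trans (Finset.card_image_le) hNcard
      have : ¬ (L e ⊆ F) := by
        intro hsub
        have := Finset.card_le_card hsub
        rw [hL e] at this
        omega
      obtain ⟨a, haL, haF⟩ := Finset.not_subset.mp this
      refine ⟨Function.update c e a, ?_, ?_⟩
      · intro e'
        rcases eq_or_ne e' e with rfl | hne
        · rwa [Function.update_self]
        · rw [Function.update_of_ne hne]; exact hc1 e'
      · intro e₁ he₁ e₂ he₂ hadj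
        have hne12 : e₁ ≠ e₂ := hadj.ne
        rcases eq_or_ne e₁ e with rfl | h1
        · rcases eq_or_ne e₂ e₁ with rfl | h2
          · exact absurd hadj (G.lineGraph.irrefl)
          · rw [Function.update_self, Function.update_of_ne h2]
            intro hcontra
            apply haF
            have : a = c e₂ + f e₁ e₂ := by
              rw [sub_eq_iff_eq_add] at hcontra
              rw [hcontra]; abel
            rw [this]
            exact Finset.mem_image_of_mem _ (Finset.mem_filter.mpr ⟨he₂, hadj⟩)
        · rcases eq_or_ne e₂ e with rfl | h2
          · rw [Function.update_self, Function.update_of_ne h1]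
            intro hcontra
            apply haF
            have hfe : f e₁ e₂ = - f e₂ e₁ := hf e₂ e₁
            have : a = c e₁ + f e₂ e₁ := by
              rw [hfe, sub_eq_iff_eq_add] at hcontra
              rw [hcontra]; abel
            rw [this]
            exact Finset.mem_image_of_mem _
              (Finset.mem_filter.mpr ⟨he₁, hadj.symm⟩)
          · rw [Function.update_of_ne h1, Function.update_of_ne h2]
            exact hc2 e₁ (Finset.mem_erase.mpr ⟨h1, he₁⟩) e₂ (Finset.mem_erase.mpr ⟨h2, he₂⟩) hadj
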